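/- For every m = (m₁,…,m_ℓ) ∈ ℕ^ℓ it holds that h(A^m) = ∏_{k=1}^{ℓ} (1 − q^{2k})/(1 − q^{2(k + Σ_{i=1}^{k} m_i)}). -/

import Mathlib

noncomputable section

/-- The partial sum `A_j = Σ_{i=1}^{j} z_i z_i*` (indices of `z` shifted to start at `0`). -/
def Apart {A : Type*} [Ring A] [StarRing A] {N : ℕ} (z : Fin N → A) (j : ℕ) : A :=
  ∑ i ∈ Finset.univ.filter (fun i : Fin N => (i : ℕ) < j), z i * star (z i)

/-- The ordered monomial `A^m = A₁^{m₁} ⋯ A_ℓ^{m_ℓ}`. -/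
def Apow {A : Type*} [Ring A] [StarRing A] {ℓ : ℕ} (z : Fin (ℓ + 1) → A) (m : Fin ℓ → ℕ) : A :=
  ((List.finRange ℓ).map (fun k : Fin ℓ => Apart z ((k : ℕ) + 1) ^ m k)).prod

def mext {ℓ : ℕ} (m : Fin ℓ → ℕ) (t : ℕ) : ℕ := if h : t < ℓ then m ⟨t, h⟩ else 0

def Qrest {A : Type*} [Ring A] [StarRing A] {ℓ : ℕ} (z : Fin (ℓ + 1) → A) (m : Fin ℓ → ℕ)
    (t : ℕ) : A :=
  (((List.finRange ℓ).drop t).map (fun k : Fin ℓ => Apart z ((k : ℕ) + 1) ^ m k)).prod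

lemma Qrest_zero {A : Type*} [Ring A] [StarRing A] {ℓ : ℕ} (z : Fin (ℓ + 1) → A)
    (m : Fin ℓ → ℕ) : Qrest z m 0 = Apow z m := by
  simp [Qrest, Apow]

lemma Qrest_top {A : Type*} [Ring A] [StarRing A] {ℓ : ℕ} (z : Fin (ℓ + 1) → A)
    (m : Fin ℓ → ℕ) {t : ℕ} (ht : ℓ ≤ t) : Qrest z m t = 1 := by
  rw [Qrest, List.drop_eq_nil_of_le (by simpa using ht)]
  simp

lemma Qrest_succ {A : Type*} [Ring A] [StarRing A] {ℓ : ℕ} (z : Fin (ℓ + 1) → A)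
    (m : Fin ℓ → ℕ) {t : ℕ} (ht : t < ℓ) :
    Qrest z m t = Apart z (t + 1) ^ (mext m t) * Qrest z m (t + 1) := by
  rw [show Qrest z m t
      = (((List.finRange ℓ).drop t).map (fun k : Fin ℓ => Apart z ((k : ℕ) + 1) ^ m k)).prod
      from rfl,
    List.drop_eq_getElem_cons (by simpa using ht), List.map_cons, List.prod_cons]
  have hg : (List.finRange ℓ)[t]'(by simpa using ht) = ⟨t, ht⟩ := by
    simp [List.getElem_finRange, Fin.cast]
  rw [hg, show Qrest z m (t+1)
      = (((List.finRange ℓ).drop (t+1)).map (fun k : Fin ℓ => Apart z ((k : ℕ) + 1) ^ m k)).prod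
      from rfl]
  rw [mext, dif_pos ht]

lemma Qrest_succ' {A : Type*} [Ring A] [StarRing A] {ℓ : ℕ} (z : Fin (ℓ + 1) → A)
    (m : Fin ℓ → ℕ) (t : ℕ) :
    Qrest z m t = Apart z (t + 1) ^ (mext m t) * Qrest z m (t + 1) := by
  by_cases ht : t < ℓ
  · exact Qrest_succ z m ht
  · push_neg at ht
    rw [Qrest_top z m ht, Qrest_top z m (by omega), mext, dif_neg (by omega), pow_zero, one_mul]

/-- Let `z₁,…,z_N` satisfy the quantum sphere relations in a unital
`ℂ`-`*`-algebra and let `h` be a normalized linear functional satisfying the modular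
relations for the Haar state of `SU_q(N)`. Then for every `m ∈ ℕ^ℓ` one has
`h(A^m) = ∏_{k=1}^{ℓ} (1 − q^{2k})/(1 − q^{2(k + Σ_{i=1}^{k} m_i)})`.
(The indices of `z` and `m` are shifted to start at `0`.) -/
theorem haar_apply_Apow
    {A : Type*} [Ring A] [Algebra ℂ A] [StarRing A] [StarModule ℂ A]
    (q : ℝ) (hq : q ∈ Set.Ioo (0 : ℝ) 1) (ℓ : ℕ) (hℓ : 1 ≤ ℓ)
    (z : Fin (ℓ + 1) → A)
    (hcomm : ∀ i j : Fin (ℓ + 1), i < j → z i * z j = (q : ℂ) • (z j * z i))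
    (hstar : ∀ i j : Fin (ℓ + 1), i ≠ j → star (z i) * z j = (q : ℂ) • (z j * star (z i)))
    (hrel : ∀ j : Fin ℓ,
      star (z j.succ) * z j.succ - z j.succ * star (z j.succ)
        = (1 - (q : ℂ) ^ 2) •
            ∑ i ∈ Finset.univ.filter (fun i : Fin (ℓ + 1) => (i : ℕ) ≤ (j : ℕ)),
              z i * star (z i))
    (hz0 : star (z 0) * z 0 = z 0 * star (z 0))
    (hsum : ∑ i : Fin (ℓ + 1), z i * star (z i) = 1)
    (h : A →ₗ[ℂ] ℂ) (h1 : h 1 = 1)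
    (hmod : ∀ (x : A) (j : Fin (ℓ + 1)),
      h (z j * x) = (q : ℂ) ^ (2 * (j : ℕ)) * h (x * z j))
    (hmodstar : ∀ (x : A) (j : Fin (ℓ + 1)),
      h (star (z j) * x) = ((q : ℂ) ^ (2 * (j : ℕ)))⁻¹ * h (x * star (z j)))
    (m : Fin ℓ → ℕ) :
    h (Apow z m)
      = ∏ k : Fin ℓ,
          (1 - (q : ℂ) ^ (2 * ((k : ℕ) + 1)))
            / (1 - (q : ℂ) ^ (2 * ((k : ℕ) + 1
                + ∑ i ∈ Finset.univ.filter (fun i : Fin ℓ => (i : ℕ) ≤ (k : ℕ)), m i))) := by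
  obtain ⟨hq0, hq1⟩ := hq
  have hqC : (q : ℂ) ≠ 0 := Complex.ofReal_ne_zero.mpr (ne_of_gt hq0)
  have hq2 : ((q : ℂ)) ^ 2 ≠ 0 := pow_ne_zero _ hqC
  have hne : ∀ t : ℕ, t ≠ 0 → (1 : ℂ) - (q : ℂ) ^ (2 * t) ≠ 0 := by
    intro t ht
    have hlt : (q : ℝ) ^ (2 * t) < 1 := pow_lt_one₀ hq0.le hq1 (by omega)
    have h2 : ((q : ℂ)) ^ (2 * t) ≠ 1 := by
      intro hc
      rw [show ((q : ℂ)) ^ (2 * t) = ((q ^ (2 * t) : ℝ) : ℂ) by push_cast; ring] at hc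
      have : (q : ℝ) ^ (2 * t) = 1 := by exact_mod_cast hc
      linarith
    exact sub_ne_zero.mpr (Ne.symm h2)
  -- basic Apart lemmas
  have Apart_zero : Apart z 0 = 0 := by simp [Apart]
  have Apart_succ : ∀ k : Fin (ℓ + 1), Apart z ((k : ℕ) + 1) = Apart z (k : ℕ) + z k * star (z k) := by
    intro k
    have hins : Finset.univ.filter (fun i : Fin (ℓ+1) => (i:ℕ) < (k:ℕ)+1)
        = insert k (Finset.univ.filter (fun i : Fin (ℓ+1) => (i:ℕ) < (k:ℕ))) := by
      ext i
      simp only [Finset.mem_filter, Finset.mem_insert, Finset.mem_univ, true_and, Fin.ext_iff]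
      omega
    rw [Apart, hins, Finset.sum_insert (by simp), Apart, add_comm]
  have Apart_top : ∀ j : ℕ, ℓ + 1 ≤ j → Apart z j = 1 := by
    intro j hj
    have hfil : Finset.univ.filter (fun i : Fin (ℓ+1) => (i:ℕ) < j) = Finset.univ := by
      ext i
      simp only [Finset.mem_filter, Finset.mem_univ, true_and, iff_true]
      exact lt_of_lt_of_le i.isLt hj
    rw [Apart, hfil, hsum]
  have Apart_sa : ∀ j : ℕ, star (Apart z j) = Apart z j := by
    intro j
    rw [Apart, star_sum]
    apply Finset.sum_congr rfl
    intros
    rw [star_mul, star_star]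
  -- term-wise commutation lemmas
  have T1 : ∀ i k : Fin (ℓ+1), i < k →
      (z i * star (z i)) * z k = ((q:ℂ)^2) • (z k * (z i * star (z i))) := by
    intro i k hik
    calc (z i * star (z i)) * z k = z i * (star (z i) * z k) := by rw [mul_assoc]
      _ = z i * ((q:ℂ) • (z k * star (z i))) := by rw [hstar i k (ne_of_lt hik)]
      _ = (q:ℂ) • ((z i * z k) * star (z i)) := by rw [mul_smul_comm, mul_assoc]
      _ = (q:ℂ) • (((q:ℂ) • (z k * z i)) * star (z i)) := by rw [hcomm i k hik]
      _ = ((q:ℂ)^2) • (z k * (z i * star (z i))) := by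
            rw [smul_mul_assoc, smul_smul, ← pow_two, mul_assoc]
  have T2 : ∀ i k : Fin (ℓ+1), k < i →
      z k * (z i * star (z i)) = (z i * star (z i)) * z k := by
    intro i k hki
    have h3 : z k * star (z i) = (q:ℂ)⁻¹ • (star (z i) * z k) := by
      rw [hstar i k (ne_of_gt hki), smul_smul, inv_mul_cancel₀ hqC, one_smul]
    calc z k * (z i * star (z i)) = (z k * z i) * star (z i) := by rw [mul_assoc]
      _ = (q:ℂ) • (z i * (z k * star (z i))) := by rw [hcomm k i hki, smul_mul_assoc, mul_assoc]
      _ = (q:ℂ) • (z i * ((q:ℂ)⁻¹ • (star (z i) * z k))) := by rw [h3]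
      _ = ((q:ℂ) * (q:ℂ)⁻¹) • (z i * star (z i) * z k) := by
            rw [mul_smul_comm, smul_smul, mul_assoc]
      _ = (z i * star (z i)) * z k := by rw [mul_inv_cancel₀ hqC, one_smul]
  -- uniform relation
  have hrel' : ∀ k : Fin (ℓ+1),
      star (z k) * z k = z k * star (z k) + ((1:ℂ) - (q:ℂ)^2) • Apart z (k:ℕ) := by
    intro k
    induction k using Fin.cases with
    | zero => simpa [Apart_zero] using hz0
    | succ i =>
      have hfil : (Finset.univ.filter (fun i' : Fin (ℓ+1) => (i':ℕ) ≤ (i:ℕ)))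
          = Finset.univ.filter (fun i' : Fin (ℓ+1) => (i':ℕ) < ((i.succ : Fin (ℓ+1)):ℕ)) := by
        ext i'
        simp only [Finset.mem_filter, Finset.mem_univ, true_and, Fin.val_succ]
        omega
      have hr := hrel i
      rw [hfil] at hr
      rw [Apart, add_comm]
      exact eq_add_of_sub_eq hr
  -- L1 : Apart z j q-commutes with z k for j ≤ k
  have l1 : ∀ (j : ℕ) (k : Fin (ℓ+1)), j ≤ (k:ℕ) →
      Apart z j * z k = ((q:ℂ)^2) • (z k * Apart z j) := by
    intro j
    induction j with
    | zero => intro k _; simp [Apart_zero]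
    | succ j ih =>
      intro k hk
      have hkl := k.isLt
      have hj : j < ℓ + 1 := by omega
      have hfin : (⟨j, hj⟩ : Fin (ℓ+1)) < k := by
        rw [Fin.lt_def]; exact (by omega : j < (k:ℕ))
      have hA := Apart_succ ⟨j, hj⟩
      rw [show ((⟨j, hj⟩ : Fin (ℓ+1)) : ℕ) = j from rfl] at hA
      rw [hA, add_mul, mul_add, smul_add, ih k (by omega), T1 ⟨j, hj⟩ k hfin]
  -- qpow
  have qpow : ∀ (c : ℂ) (a b : A), a * b = c • (b * a) → ∀ n : ℕ,
      a ^ n * b = (c ^ n) • (b * a ^ n) := by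
    intro c a b hab n
    induction n with
    | zero => simp
    | succ n ih =>
      calc a^(n+1) * b = a^n * (a * b) := by rw [pow_succ, mul_assoc]
        _ = a^n * (c • (b * a)) := by rw [hab]
        _ = c • ((a^n * b) * a) := by rw [mul_smul_comm, mul_assoc]
        _ = c • ((c^n • (b * a^n)) * a) := by rw [ih]
        _ = (c^(n+1)) • (b * a^(n+1)) := by
              rw [smul_mul_assoc, smul_smul, mul_assoc, ← pow_succ, ← pow_succ']
  -- commute with powers
  have cpow : ∀ (a b : A), a * b = b * a → ∀ n : ℕ, a * b ^ n = b ^ n * a := by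
    intro a b hab n
    exact ((Commute.pow_right (hab : Commute a b) n)).eq
  -- L2 : z k commutes with Apart z j for k < j
  have l2 : ∀ (k : Fin (ℓ+1)) (j : ℕ), (k:ℕ) < j → z k * Apart z j = Apart z j * z k := by
    intro k j
    induction j with
    | zero => intro hk; exact absurd hk (Nat.not_lt_zero _)
    | succ j ih =>
      intro hk
      rcases Nat.lt_or_ge j (ℓ+1) with hj | hj
      · rcases Nat.lt_or_ge (k:ℕ) j with hkj | hkj
        · have hfin : k < (⟨j, hj⟩ : Fin (ℓ+1)) := by
            rw [Fin.lt_def]; exact hkj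
          have hA := Apart_succ ⟨j, hj⟩
          rw [show ((⟨j, hj⟩ : Fin (ℓ+1)) : ℕ) = j from rfl] at hA
          rw [hA, mul_add, add_mul, ih hkj, T2 ⟨j, hj⟩ k hfin]
        · have hjk : j = (k:ℕ) := by omega
          subst hjk
          have hA := Apart_succ k
          rw [hA, mul_add, add_mul]
          have e2 : z k * Apart z (k:ℕ) = ((q:ℂ)^2)⁻¹ • (Apart z (k:ℕ) * z k) := by
            rw [l1 (k:ℕ) k le_rfl, smul_smul, inv_mul_cancel₀ hq2, one_smul]
          have e3 : z k * star (z k)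
              = star (z k) * z k - ((1:ℂ) - (q:ℂ)^2) • Apart z (k:ℕ) := by
            rw [hrel' k, add_sub_cancel_right]
          have e4 : z k * (z k * star (z k))
              = (z k * star (z k)) * z k
                - (((1:ℂ)-(q:ℂ)^2) * ((q:ℂ)^2)⁻¹) • (Apart z (k:ℕ) * z k) := by
            conv_lhs => rw [e3]
            rw [mul_sub, ← mul_assoc, mul_smul_comm, e2, smul_smul]
          rw [e2, e4]
          match_scalars <;> field_simp <;> ring
      · rw [Apart_top (j+1) (by omega), mul_one, one_mul]
  have l2s : ∀ (k : Fin (ℓ+1)) (j : ℕ), (k:ℕ) < j →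
      star (z k) * Apart z j = Apart z j * star (z k) := by
    intro k j hkj
    have hst := congrArg star (l2 k j hkj)
    rw [star_mul, star_mul, Apart_sa] at hst
    exact hst.symm
  have l1s : ∀ (j : ℕ) (k : Fin (ℓ+1)), j ≤ (k:ℕ) →
      star (z k) * Apart z j = ((q:ℂ)^2) • (Apart z j * star (z k)) := by
    intro j k hjk
    have hst := congrArg star (l1 j k hjk)
    rw [star_mul, Apart_sa, star_smul, star_mul, Apart_sa] at hst
    simpa [Complex.star_def, Complex.conj_ofReal] using hst
  -- generic commutation with Apart
  have sum_comm_lemma : ∀ (a : ℕ) (B : A),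
      (∀ i : Fin (ℓ+1), (i:ℕ) < a → z i * B = B * z i) →
      (∀ i : Fin (ℓ+1), (i:ℕ) < a → star (z i) * B = B * star (z i)) →
      Apart z a * B = B * Apart z a := by
    intro a B hB1 hB2
    rw [Apart, Finset.sum_mul, Finset.mul_sum]
    apply Finset.sum_congr rfl
    intro i hi
    simp only [Finset.mem_filter, Finset.mem_univ, true_and] at hi
    calc (z i * star (z i)) * B = z i * (star (z i) * B) := by rw [mul_assoc]
      _ = (z i * B) * star (z i) := by rw [hB2 i hi, mul_assoc]
      _ = B * (z i * star (z i)) := by rw [hB1 i hi, mul_assoc]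
  -- the key one-step relation
  have Rdiv : ∀ (k : Fin (ℓ+1)) (n : ℕ) (X : A),
      z k * X = X * z k → star (z k) * X = X * star (z k) →
      h (Apart z (k:ℕ) ^ (n+1) * X)
        = ((1 - (q:ℂ)^(2*((k:ℕ)+n))) / (1 - (q:ℂ)^(2*((k:ℕ)+n+1))))
            * h (Apart z ((k:ℕ)+1) * (Apart z (k:ℕ) ^ n * X)) := by
    intro k n X hX1 hX2
    have hPn : Apart z (k:ℕ) ^ n * z k = (((q:ℂ)^2)^n) • (z k * Apart z (k:ℕ) ^ n) :=
      qpow _ _ _ (l1 (k:ℕ) k le_rfl) n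
    have key : h ((z k * star (z k)) * (Apart z (k:ℕ)^n * X))
        = (q:ℂ)^(2*((k:ℕ)+n)) * (h ((z k * star (z k)) * (Apart z (k:ℕ)^n * X))
            + (1 - (q:ℂ)^2) * h (Apart z (k:ℕ)^(n+1) * X)) := by
      have e1 : (star (z k) * (Apart z (k:ℕ)^n * X)) * z k
          = (((q:ℂ)^2)^n) • ((z k * star (z k)) * (Apart z (k:ℕ)^n * X)
              + ((1:ℂ) - (q:ℂ)^2) • (Apart z (k:ℕ)^(n+1) * X)) := by
        calc (star (z k) * (Apart z (k:ℕ)^n * X)) * z k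
            = star (z k) * (Apart z (k:ℕ)^n * (X * z k)) := by rw [mul_assoc, mul_assoc]
          _ = star (z k) * (Apart z (k:ℕ)^n * (z k * X)) := by rw [← hX1]
          _ = star (z k) * ((Apart z (k:ℕ)^n * z k) * X) := by
                rw [← mul_assoc (Apart z (k:ℕ)^n) (z k) X]
          _ = star (z k) * (((((q:ℂ)^2)^n) • (z k * Apart z (k:ℕ)^n)) * X) := by rw [hPn]
          _ = (((q:ℂ)^2)^n) • ((star (z k) * z k) * (Apart z (k:ℕ)^n * X)) := by
                rw [smul_mul_assoc, mul_smul_comm, mul_assoc, ← mul_assoc (star (z k)) (z k)]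
          _ = (((q:ℂ)^2)^n) • ((z k * star (z k) + ((1:ℂ) - (q:ℂ)^2) • Apart z (k:ℕ))
                * (Apart z (k:ℕ)^n * X)) := by rw [hrel' k]
          _ = (((q:ℂ)^2)^n) • ((z k * star (z k)) * (Apart z (k:ℕ)^n * X)
              + ((1:ℂ) - (q:ℂ)^2) • (Apart z (k:ℕ)^(n+1) * X)) := by
                rw [add_mul, smul_mul_assoc,
                  ← mul_assoc (Apart z (k:ℕ)) (Apart z (k:ℕ)^n) X, ← pow_succ']
      calc h ((z k * star (z k)) * (Apart z (k:ℕ)^n * X))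
          = h (z k * (star (z k) * (Apart z (k:ℕ)^n * X))) := by rw [mul_assoc]
        _ = (q:ℂ)^(2*(k:ℕ)) * h ((star (z k) * (Apart z (k:ℕ)^n * X)) * z k) := hmod _ k
        _ = (q:ℂ)^(2*(k:ℕ)) * ((((q:ℂ)^2)^n)
              * (h ((z k * star (z k)) * (Apart z (k:ℕ)^n * X))
                + (1 - (q:ℂ)^2) * h (Apart z (k:ℕ)^(n+1) * X))) := by
              rw [e1, map_smul, smul_eq_mul, map_add, map_smul, smul_eq_mul]
        _ = _ := by
              rw [← mul_assoc, ← pow_mul, ← pow_add,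
                show 2*(k:ℕ) + 2*n = 2*((k:ℕ)+n) from by ring]
    have hA1 : h (Apart z ((k:ℕ)+1) * (Apart z (k:ℕ)^n * X))
        = h (Apart z (k:ℕ)^(n+1) * X) + h ((z k * star (z k)) * (Apart z (k:ℕ)^n * X)) := by
      rw [Apart_succ k, add_mul, ← mul_assoc (Apart z (k:ℕ)) (Apart z (k:ℕ)^n) X,
        ← pow_succ', map_add]
    have hden := hne ((k:ℕ)+n+1) (by omega)
    rw [div_mul_eq_mul_div, eq_div_iff hden, hA1,
      show (q:ℂ)^(2*((k:ℕ)+n+1)) = (q:ℂ)^(2*((k:ℕ)+n)) * (q:ℂ)^2 from by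
        rw [← pow_add]; congr 1]
    linear_combination -key
  -- moving a full power up one index
  have Rpow : ∀ (k : Fin (ℓ+1)) (n : ℕ), 1 ≤ (k:ℕ) + n → ∀ X : A,
      z k * X = X * z k → star (z k) * X = X * star (z k) →
      h (Apart z (k:ℕ) ^ n * X)
        = ((1 - (q:ℂ)^(2*(k:ℕ))) / (1 - (q:ℂ)^(2*((k:ℕ)+n))))
            * h (Apart z ((k:ℕ)+1) ^ n * X) := by
    intro k n
    induction n with
    | zero =>
      intro hk1 X _ _
      have hz : (1 - (q:ℂ)^(2*((k:ℕ)+0))) = (1 - (q:ℂ)^(2*(k:ℕ))) := by norm_num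
      rw [pow_zero, pow_zero, hz, div_self (hne _ (by omega)), one_mul, one_mul]
    | succ n ih =>
      intro hk1 X hX1 hX2
      by_cases hk0 : (k:ℕ) = 0
      · rw [hk0, Apart_zero, zero_pow (by omega : n+1 ≠ 0), zero_mul, map_zero,
          show 2*0 = 0 from rfl, pow_zero, sub_self, zero_div, zero_mul]
      · have hkn : (k:ℕ) + n ≠ 0 := by omega
        have hAP : Apart z (k:ℕ) * Apart z ((k:ℕ)+1) = Apart z ((k:ℕ)+1) * Apart z (k:ℕ) :=
          sum_comm_lemma (k:ℕ) (Apart z ((k:ℕ)+1))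
            (fun i hi => l2 i ((k:ℕ)+1) (by omega))
            (fun i hi => l2s i ((k:ℕ)+1) (by omega))
        have hc2 : z k * (Apart z ((k:ℕ)+1) * X) = (Apart z ((k:ℕ)+1) * X) * z k := by
          rw [← mul_assoc, l2 k ((k:ℕ)+1) (by omega), mul_assoc, hX1, ← mul_assoc]
        have hc3 : star (z k) * (Apart z ((k:ℕ)+1) * X)
            = (Apart z ((k:ℕ)+1) * X) * star (z k) := by
          rw [← mul_assoc, l2s k ((k:ℕ)+1) (by omega), mul_assoc, hX2, ← mul_assoc]
        have hmove : Apart z ((k:ℕ)+1) * (Apart z (k:ℕ)^n * X)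
            = Apart z (k:ℕ)^n * (Apart z ((k:ℕ)+1) * X) := by
          rw [← mul_assoc, cpow _ _ hAP.symm n, mul_assoc]
        rw [Rdiv k n X hX1 hX2, hmove, ih (by omega) (Apart z ((k:ℕ)+1) * X) hc2 hc3,
          ← mul_assoc (Apart z ((k:ℕ)+1)^n) (Apart z ((k:ℕ)+1)) X, ← pow_succ]
        have ha := hne ((k:ℕ)+n) hkn
        have hb := hne ((k:ℕ)+n+1) (by omega)
        rw [← mul_assoc]
        congr 1
        rw [div_mul_div_comm, mul_comm (1 - (q:ℂ)^(2*((k:ℕ)+n))) (1 - (q:ℂ)^(2*(k:ℕ)))]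
        rw [mul_div_mul_right _ _ ha, show (k:ℕ) + (n+1) = (k:ℕ) + n + 1 from by omega]
  -- commutation of z i with the tail product
  have restcomm : ∀ (d t : ℕ), ℓ ≤ t + d → ∀ i : Fin (ℓ+1), (i:ℕ) ≤ t →
      (z i * Qrest z m t = Qrest z m t * z i)
        ∧ (star (z i) * Qrest z m t = Qrest z m t * star (z i)) := by
    intro d
    induction d with
    | zero =>
      intro t ht i _
      rw [Qrest_top z m (by omega)]
      simp
    | succ d ih =>
      intro t ht i hi
      by_cases htl : ℓ ≤ t
      · rw [Qrest_top z m htl]; simp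
      · push_neg at htl
        rw [Qrest_succ z m htl]
        have e1' := cpow _ _ (l2 i (t+1) (by omega)) (mext m t)
        have e2' := cpow _ _ (l2s i (t+1) (by omega)) (mext m t)
        obtain ⟨f1, f2⟩ := ih (t+1) (by omega) i (by omega)
        constructor
        · rw [← mul_assoc, e1', mul_assoc, f1, ← mul_assoc]
        · rw [← mul_assoc, e2', mul_assoc, f2, ← mul_assoc]
  -- main downward induction
  have C : ∀ (d t : ℕ), t + d = ℓ → ∀ M : ℕ,
      h (Apart z (t+1) ^ M * Qrest z m (t+1))
        = ∏ s ∈ Finset.range d,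
            ((1 - (q:ℂ)^(2*(t+1+s)))
              / (1 - (q:ℂ)^(2*(t+1+s+M+ ∑ u ∈ Finset.range s, mext m (t+1+u))))) := by
    intro d
    induction d with
    | zero =>
      intro t ht M
      rw [Apart_top (t+1) (by omega), one_pow, Qrest_top z m (by omega), mul_one, h1,
        Finset.prod_range_zero]
    | succ d ih =>
      intro t ht M
      have htℓ : t < ℓ := by omega
      have hlt : t + 1 < ℓ + 1 := by omega
      obtain ⟨hc1, hc2⟩ := restcomm ℓ (t+1) (by omega) ⟨t+1, hlt⟩ le_rfl
      have step : h (Apart z (t+1) ^ M * Qrest z m (t+1))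
          = ((1 - (q:ℂ)^(2*(t+1))) / (1 - (q:ℂ)^(2*(t+1+M))))
              * h (Apart z (t+1+1) ^ M * Qrest z m (t+1)) :=
        Rpow ⟨t+1, hlt⟩ M (Nat.le_add_right_of_le (Nat.succ_le_succ (Nat.zero_le t))) (Qrest z m (t+1)) hc1 hc2
      rw [step, Qrest_succ' z m (t+1),
        ← mul_assoc (Apart z (t+1+1) ^ M), ← pow_add,
        ih (t+1) (by omega) (M + mext m (t+1)), Finset.prod_range_succ', mul_comm]
      congr 1
      apply Finset.prod_congr rfl
      intro s _
      have hnum : 2*(t+1+1+s) = 2*(t+1+(s+1)) := by ring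
      have hsum2 : ∑ u ∈ Finset.range (s+1), mext m (t+1+u)
          = mext m (t+1) + ∑ u ∈ Finset.range s, mext m (t+1+1+u) := by
        rw [Finset.sum_range_succ']
        have he : ∑ u ∈ Finset.range s, mext m (t+1+(u+1))
            = ∑ u ∈ Finset.range s, mext m (t+1+1+u) :=
          Finset.sum_congr rfl (fun u _ => by congr 1; omega)
        rw [he]
        have h0 : mext m (t+1+0) = mext m (t+1) := by congr 1
        rw [h0, Nat.add_comm]
      have hden : 2*(t+1+1+s+(M+mext m (t+1))+ ∑ u ∈ Finset.range s, mext m (t+1+1+u))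
          = 2*(t+1+(s+1)+M+ ∑ u ∈ Finset.range (s+1), mext m (t+1+u)) := by
        rw [hsum2]; ring
      rw [hnum, hden]
  -- assemble
  have hSUM : ∀ s : ℕ, s < ℓ →
      ∑ i ∈ Finset.univ.filter (fun i : Fin ℓ => (i:ℕ) ≤ s), m i
        = ∑ u ∈ Finset.range (s+1), mext m u := by
    intro s hs
    rw [Finset.sum_filter]
    have hterm : ∀ i : Fin ℓ,
        (if (i:ℕ) ≤ s then m i else 0)
          = (fun u : ℕ => if u ≤ s then mext m u else 0) (i:ℕ) := by
      intro i
      simp only [mext, i.isLt, dif_pos, Fin.eta]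
    rw [Finset.sum_congr rfl (fun i _ => hterm i),
      Fin.sum_univ_eq_sum_range (fun u => if u ≤ s then mext m u else 0) ℓ,
      ← Finset.sum_filter,
      show Finset.filter (fun u => u ≤ s) (Finset.range ℓ) = Finset.range (s+1) from by
        ext u; simp only [Finset.mem_filter, Finset.mem_range]; omega]
  have hstart : h (Apow z m)
      = h (Apart z (0+1) ^ (mext m 0) * Qrest z m (0+1)) := by
    rw [← Qrest_zero z m, Qrest_succ z m (show 0 < ℓ by omega)]
  rw [hstart, C ℓ 0 (by omega) (mext m 0),
    Fin.prod_univ_eq_prod_range (fun s : ℕ => (1 - (q:ℂ)^(2*(s+1)))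
      / (1 - (q:ℂ)^(2*(s+1+ ∑ i ∈ Finset.univ.filter (fun i : Fin ℓ => (i:ℕ) ≤ s), m i)))) ℓ]
  apply Finset.prod_congr rfl
  intro s hs
  have hsl : s < ℓ := Finset.mem_range.mp hs
  have hnum : 2*(0+1+s) = 2*(s+1) := by ring
  have hden : 2*(0+1+s+mext m 0+ ∑ u ∈ Finset.range s, mext m (0+1+u))
      = 2*(s+1+ ∑ i ∈ Finset.univ.filter (fun i : Fin ℓ => (i:ℕ) ≤ s), m i) := by
    rw [hSUM s hsl, Finset.sum_range_succ']
    have he : ∑ u ∈ Finset.range s, mext m (u+1)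
        = ∑ u ∈ Finset.range s, mext m (0+1+u) :=
      Finset.sum_congr rfl (fun u _ => by congr 1; omega)
    rw [he, show mext m 0 = mext m (0+0) from rfl]
    ring
  rw [hnum, hden]

end
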